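/- Let a ≥ 0, ε > 0, let F be a finite index set, let (θ_j)_{j∈F} be nonzero real numbers, let s_j : [0,∞) → ℂ be continuously differentiable for each j ∈ F, and let w : [0,∞) → ℂ be continuously differentiable and satisfy w'(t) + a w(t) = Σ_{j∈F} s_j(t) e^{iθ_j t/ε} for all t ≥ 0. Then for all t ≥ 0, |w(t)| ≤ |w(0)| e^{-at} + ε Σ_{j∈F} |θ_j|⁻¹ [ |s_j(t)| + |s_j(0)| e^{-at} + ∫₀ᵗ (|s_j'(u)| + a|s_j(u)|) e^{-a(t-u)} du ]. (Small divisor estimate: the response of a damped mode to non-resonant fast-oscillating forcing is of order ε.) -/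

import Mathlib

set_option maxHeartbeats 1000000

open Real MeasureTheory intervalIntegral

/-- Small divisor estimate: the response of a damped mode to non-resonant fast-oscillating
forcing is of order `ε`. -/
theorem small_divisor_ode_estimate
    (a ε : ℝ) (ha : 0 ≤ a) (hε : 0 < ε)
    (ι : Type) (F : Finset ι) (θ : ι → ℝ) (hθ : ∀ j ∈ F, θ j ≠ 0)
    (s s' : ι → ℝ → ℂ)
    (hs : ∀ j ∈ F, ∀ u : ℝ, 0 ≤ u → HasDerivAt (s j) (s' j u) u)
    (hs' : ∀ j ∈ F, ContinuousOn (s' j) (Set.Ici (0 : ℝ)))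
    (w w' : ℝ → ℂ)
    (hw : ∀ t : ℝ, 0 ≤ t → HasDerivAt w (w' t) t)
    (hode : ∀ t : ℝ, 0 ≤ t →
      w' t + (a : ℂ) * w t =
        ∑ j ∈ F, s j t * Complex.exp (Complex.I * (θ j : ℂ) * (t : ℂ) / (ε : ℂ))) :
    ∀ t : ℝ, 0 ≤ t →
      ‖w t‖ ≤ ‖w 0‖ * Real.exp (-a * t) +
        ε * ∑ j ∈ F, |θ j|⁻¹ *
          (‖s j t‖ + ‖s j 0‖ * Real.exp (-a * t) +
            ∫ u in (0 : ℝ)..t, (‖s' j u‖ + a * ‖s j u‖) * Real.exp (-a * (t - u))) := by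
  intro t ht
  have hεC : (ε : ℂ) ≠ 0 := by exact_mod_cast hε.ne'
  set E : ι → ℝ → ℂ := fun j u => Complex.exp (Complex.I * (θ j : ℂ) * (u : ℂ) / (ε : ℂ))
    with hEdef
  have hIcc : Set.uIcc (0:ℝ) t = Set.Icc 0 t := Set.uIcc_of_le ht
  have hsub : Set.Icc (0:ℝ) t ⊆ Set.Ici 0 := fun u hu => hu.1
  have hscont : ∀ j ∈ F, ContinuousOn (s j) (Set.Ici (0:ℝ)) := fun j hj u hu =>
    (hs j hj u hu).continuousAt.continuousWithinAt
  have hEcont : ∀ j, Continuous (E j) := fun j =>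
    Complex.continuous_exp.comp ((continuous_const.mul Complex.continuous_ofReal).div_const _)
  have hexpcont : Continuous fun u : ℝ => Complex.exp ((a:ℂ) * u) :=
    Complex.continuous_exp.comp (continuous_const.mul Complex.continuous_ofReal)
  have hexpder : ∀ u : ℝ, HasDerivAt (fun u : ℝ => Complex.exp ((a:ℂ)*u))
      ((a:ℂ) * Complex.exp ((a:ℂ)*u)) u := by
    intro u
    have h := ((Complex.hasDerivAt_exp ((a:ℂ) * u)).comp u
      (((hasDerivAt_id ((u:ℝ):ℂ)).const_mul (a:ℂ)).comp_ofReal))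
    simpa [mul_comm, Function.comp_def] using h
  have hEder : ∀ j, ∀ u : ℝ, HasDerivAt (E j) ((Complex.I * θ j / ε) * E j u) u := by
    intro j u
    have hrw : ∀ v : ℝ, Complex.I * (θ j:ℂ) * (v:ℂ) / (ε:ℂ) = (Complex.I * θ j / ε) * v :=
      fun v => by ring
    have h := ((Complex.hasDerivAt_exp ((Complex.I * θ j / ε) * u)).comp u
      (((hasDerivAt_id ((u:ℝ):ℂ)).const_mul (Complex.I * (θ j:ℂ) / ε)).comp_ofReal))
    simp only [hEdef, hrw]
    simpa [mul_comm, Function.comp_def] using h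
  have hEnorm : ∀ j, ∀ u : ℝ, ‖E j u‖ = 1 := by
    intro j u
    have h1 : Complex.I * (θ j:ℂ) * (u:ℂ) / (ε:ℂ) = ((θ j * u / ε : ℝ) : ℂ) * Complex.I := by
      push_cast; ring
    simp only [hEdef, h1]
    simpa using Complex.norm_exp_ofReal_mul_I (θ j * u / ε)
  have henorm : ∀ u : ℝ, ‖Complex.exp ((a:ℂ)*u)‖ = Real.exp (a*u) := by
    intro u
    have h1 : (a:ℂ) * (u:ℂ) = ((a*u : ℝ) : ℂ) := by push_cast; ring
    rw [h1]
    simpa using Complex.norm_exp_ofReal (a*u)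
  -- interval integrability of the main integrands
  have hgint : ∀ j ∈ F, IntervalIntegrable
      (fun u => Complex.exp ((a:ℂ)*u) * (s j u * E j u)) volume 0 t := by
    intro j hj
    apply ContinuousOn.intervalIntegrable
    rw [hIcc]
    exact hexpcont.continuousOn.mul
      (((hscont j hj).mono hsub).mul (hEcont j).continuousOn)
  -- FTC for the damped solution
  have hIw : Complex.exp ((a:ℂ)*t) * w t =
      w 0 + ∑ j ∈ F, ∫ u in (0:ℝ)..t, Complex.exp ((a:ℂ)*u) * (s j u * E j u) := by
    have hVder : ∀ u ∈ Set.uIcc (0:ℝ) t,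
        HasDerivAt (fun u : ℝ => Complex.exp ((a:ℂ)*u) * w u)
          (∑ j ∈ F, Complex.exp ((a:ℂ)*u) * (s j u * E j u)) u := by
      intro u hu
      rw [hIcc] at hu
      have h := (hexpder u).mul (hw u hu.1)
      have heq : (a:ℂ) * Complex.exp ((a:ℂ)*u) * w u + Complex.exp ((a:ℂ)*u) * w' u =
          ∑ j ∈ F, Complex.exp ((a:ℂ)*u) * (s j u * E j u) := by
        rw [← Finset.mul_sum, ← hode u hu.1]; ring
      rw [← heq]; exact h
    have hintsum : IntervalIntegrable
        (fun u => ∑ j ∈ F, Complex.exp ((a:ℂ)*u) * (s j u * E j u)) volume 0 t := by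
      have h2 := IntervalIntegrable.sum (μ := volume) (a := 0) (b := t) F
        (f := fun j => fun u : ℝ => Complex.exp ((a:ℂ)*u) * (s j u * E j u))
        (fun j hj => hgint j hj)
      have h3 : (∑ j ∈ F, fun u : ℝ => Complex.exp ((a:ℂ)*u) * (s j u * E j u)) =
          fun u : ℝ => ∑ j ∈ F, Complex.exp ((a:ℂ)*u) * (s j u * E j u) := by
        funext u; simp
      rwa [h3] at h2
    have hftc := intervalIntegral.integral_eq_sub_of_hasDerivAt hVder hintsum
    rw [intervalIntegral.integral_finset_sum (fun j hj => hgint j hj)] at hftc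
    have h0 : Complex.exp ((a:ℂ)*((0:ℝ):ℂ)) * w 0 = w 0 := by simp
    rw [hftc, h0]
    ring
  -- per-mode integration by parts bound
  have key_j : ∀ j ∈ F, ‖∫ u in (0:ℝ)..t, Complex.exp ((a:ℂ)*u) * (s j u * E j u)‖ ≤
      ε * |θ j|⁻¹ * (Real.exp (a*t) * ‖s j t‖ + ‖s j 0‖ +
        ∫ u in (0:ℝ)..t, (‖s' j u‖ + a * ‖s j u‖) * Real.exp (a*u)) := by
    intro j hj
    have hθj : (θ j : ℂ) ≠ 0 := by exact_mod_cast hθ j hj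
    set c : ℂ := (ε:ℂ)/(Complex.I * θ j) with hc
    have hcnorm : ‖c‖ = ε * |θ j|⁻¹ := by
      simp [hc, norm_div, norm_mul, Complex.norm_real, Complex.norm_I,
        abs_of_pos hε, div_eq_mul_inv]
    set g : ℝ → ℂ := fun u => Complex.exp ((a:ℂ)*u) * (s j u * E j u) with hg
    set q : ℝ → ℂ := fun u => Complex.exp ((a:ℂ)*u) * (((a:ℂ) * s j u + s' j u) * E j u)
      with hq
    have hqcont : ContinuousOn q (Set.Icc 0 t) := by
      apply hexpcont.continuousOn.mul
      exact ((continuousOn_const.mul ((hscont j hj).mono hsub)).add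
        (((hs' j hj).mono hsub))).mul (hEcont j).continuousOn
    have hqint : IntervalIntegrable q volume 0 t := by
      apply ContinuousOn.intervalIntegrable; rw [hIcc]; exact hqcont
    have hcqint : IntervalIntegrable (fun u => c * q u) volume 0 t := hqint.const_mul c
    have hPder : ∀ u ∈ Set.uIcc (0:ℝ) t,
        HasDerivAt (fun u : ℝ => c * (Complex.exp ((a:ℂ)*u) * s j u * E j u))
          (g u + c * q u) u := by
      intro u hu
      rw [hIcc] at hu
      have h1 := (((hexpder u).mul (hs j hj u hu.1)).mul (hEder j u)).const_mul c
      have hcc : c * (Complex.I * (θ j : ℂ) / (ε : ℂ)) = 1 := by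
        rw [hc]; field_simp
      refine h1.congr_deriv ?_
      simp only [hg, hq, Pi.mul_apply]
      linear_combination (Complex.exp ((a:ℂ)*u) * s j u * E j u) * hcc
    have hsumint : IntervalIntegrable (fun u => g u + c * q u) volume 0 t :=
      (hgint j hj).add hcqint
    have hftc := intervalIntegral.integral_eq_sub_of_hasDerivAt hPder hsumint
    rw [intervalIntegral.integral_add (hgint j hj) hcqint] at hftc
    have hIg : (∫ u in (0:ℝ)..t, g u) =
        c * (Complex.exp ((a:ℂ)*t) * s j t * E j t) -
        c * (Complex.exp ((a:ℂ)*((0:ℝ):ℂ)) * s j 0 * E j 0) - ∫ u in (0:ℝ)..t, c * q u := by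
      rw [← hftc]; ring
    have hnorm1 : ‖c * (Complex.exp ((a:ℂ)*t) * s j t * E j t)‖ =
        ε * |θ j|⁻¹ * (Real.exp (a*t) * ‖s j t‖) := by
      rw [norm_mul, norm_mul, norm_mul, hcnorm, henorm, hEnorm, mul_one]
    have hnorm2 : ‖c * (Complex.exp ((a:ℂ)*((0:ℝ):ℂ)) * s j 0 * E j 0)‖ =
        ε * |θ j|⁻¹ * ‖s j 0‖ := by
      rw [norm_mul, norm_mul, norm_mul, hcnorm, henorm, hEnorm, mul_one]
      norm_num
    have hnormq : ∀ u ∈ Set.Icc (0:ℝ) t, ‖q u‖ ≤ (‖s' j u‖ + a * ‖s j u‖) * Real.exp (a*u) := by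
      intro u hu
      simp only [hq]
      rw [norm_mul, norm_mul, henorm, hEnorm, mul_one]
      have h2 : ‖(a:ℂ) * s j u + s' j u‖ ≤ ‖s' j u‖ + a * ‖s j u‖ := by
        refine (norm_add_le _ _).trans ?_
        rw [norm_mul, Complex.norm_real, Real.norm_of_nonneg ha]
        linarith
      have := Real.exp_pos (a*u)
      calc Real.exp (a*u) * ‖(a:ℂ) * s j u + s' j u‖
          ≤ Real.exp (a*u) * (‖s' j u‖ + a * ‖s j u‖) :=
            mul_le_mul_of_nonneg_left h2 this.le
        _ = (‖s' j u‖ + a * ‖s j u‖) * Real.exp (a*u) := mul_comm _ _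
    have hnormqint : IntervalIntegrable (fun u => ‖q u‖) volume 0 t := by
      apply ContinuousOn.intervalIntegrable; rw [hIcc]; exact hqcont.norm
    have hmajint : IntervalIntegrable
        (fun u => (‖s' j u‖ + a * ‖s j u‖) * Real.exp (a*u)) volume 0 t := by
      apply ContinuousOn.intervalIntegrable; rw [hIcc]
      exact ((((hs' j hj).mono hsub).norm).add
        (continuousOn_const.mul ((hscont j hj).mono hsub).norm)).mul
        (Real.continuous_exp.comp (continuous_const.mul continuous_id)).continuousOn
    have hIq : ‖∫ u in (0:ℝ)..t, c * q u‖ ≤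
        ε * |θ j|⁻¹ * ∫ u in (0:ℝ)..t, (‖s' j u‖ + a * ‖s j u‖) * Real.exp (a*u) := by
      rw [intervalIntegral.integral_const_mul, norm_mul, hcnorm]
      apply mul_le_mul_of_nonneg_left _ (by positivity)
      calc ‖∫ u in (0:ℝ)..t, q u‖ ≤ ∫ u in (0:ℝ)..t, ‖q u‖ :=
            intervalIntegral.norm_integral_le_integral_norm ht
        _ ≤ ∫ u in (0:ℝ)..t, (‖s' j u‖ + a * ‖s j u‖) * Real.exp (a*u) :=
            intervalIntegral.integral_mono_on ht hnormqint hmajint hnormq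
    calc ‖∫ u in (0:ℝ)..t, g u‖
        ≤ ‖c * (Complex.exp ((a:ℂ)*t) * s j t * E j t)‖ +
          ‖c * (Complex.exp ((a:ℂ)*((0:ℝ):ℂ)) * s j 0 * E j 0)‖ + ‖∫ u in (0:ℝ)..t, c * q u‖ := by
          rw [hIg]
          exact (norm_sub_le _ _).trans (add_le_add_left (norm_sub_le _ _) _)
      _ ≤ ε * |θ j|⁻¹ * (Real.exp (a*t) * ‖s j t‖) + ε * |θ j|⁻¹ * ‖s j 0‖ +
          ε * |θ j|⁻¹ * ∫ u in (0:ℝ)..t, (‖s' j u‖ + a * ‖s j u‖) * Real.exp (a*u) := by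
          rw [hnorm1, hnorm2]; exact add_le_add_right hIq _
      _ = ε * |θ j|⁻¹ * (Real.exp (a*t) * ‖s j t‖ + ‖s j 0‖ +
          ∫ u in (0:ℝ)..t, (‖s' j u‖ + a * ‖s j u‖) * Real.exp (a*u)) := by ring
  -- assemble the main multiplicative inequality
  have key : Real.exp (a*t) * ‖w t‖ ≤ ‖w 0‖ + ∑ j ∈ F, ε * |θ j|⁻¹ *
      (Real.exp (a*t) * ‖s j t‖ + ‖s j 0‖ +
        ∫ u in (0:ℝ)..t, (‖s' j u‖ + a * ‖s j u‖) * Real.exp (a*u)) := by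
    calc Real.exp (a*t) * ‖w t‖ = ‖Complex.exp ((a:ℂ)*t) * w t‖ := by
          rw [norm_mul, henorm]
      _ = ‖w 0 + ∑ j ∈ F, ∫ u in (0:ℝ)..t, Complex.exp ((a:ℂ)*u) * (s j u * E j u)‖ := by
          rw [hIw]
      _ ≤ ‖w 0‖ + ∑ j ∈ F, ‖∫ u in (0:ℝ)..t, Complex.exp ((a:ℂ)*u) * (s j u * E j u)‖ :=
          (norm_add_le _ _).trans (add_le_add_right (norm_sum_le _ _) _)
      _ ≤ _ := add_le_add_right (Finset.sum_le_sum key_j) _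
  -- multiply by `exp (-a*t)` and rearrange
  have hrr : Real.exp (-a*t) * Real.exp (a*t) = 1 := by
    rw [← Real.exp_add]; norm_num
  have hintrw : ∀ j ∈ F, (∫ u in (0:ℝ)..t, (‖s' j u‖ + a * ‖s j u‖) * Real.exp (-a*(t-u))) =
      Real.exp (-a*t) * ∫ u in (0:ℝ)..t, (‖s' j u‖ + a * ‖s j u‖) * Real.exp (a*u) := by
    intro j hj
    rw [← intervalIntegral.integral_const_mul]
    apply intervalIntegral.integral_congr
    intro u hu
    dsimp only
    rw [show -a*(t-u) = -a*t + a*u by ring, Real.exp_add]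
    ring
  calc ‖w t‖ = Real.exp (-a*t) * (Real.exp (a*t) * ‖w t‖) := by
        rw [← mul_assoc, hrr, one_mul]
    _ ≤ Real.exp (-a*t) * (‖w 0‖ + ∑ j ∈ F, ε * |θ j|⁻¹ *
        (Real.exp (a*t) * ‖s j t‖ + ‖s j 0‖ +
          ∫ u in (0:ℝ)..t, (‖s' j u‖ + a * ‖s j u‖) * Real.exp (a*u))) :=
        mul_le_mul_of_nonneg_left key (Real.exp_pos _).le
    _ = ‖w 0‖ * Real.exp (-a * t) +
        ε * ∑ j ∈ F, |θ j|⁻¹ *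
          (‖s j t‖ + ‖s j 0‖ * Real.exp (-a * t) +
            ∫ u in (0 : ℝ)..t, (‖s' j u‖ + a * ‖s j u‖) * Real.exp (-a * (t - u))) := by
        rw [mul_add, Finset.mul_sum, Finset.mul_sum]
        congr 1
        · ring
        apply Finset.sum_congr rfl
        intro j hj
        rw [hintrw j hj]
        linear_combination (ε * |θ j|⁻¹ * ‖s j t‖) * hrr
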